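/- Let M be a regular irreducible algebraic monoid in M_n(ℂ) and let a ∈ M. Then L_a^M and R_a^M are locally closed subsets of M_n(ℂ) (in the euclidean topology), i.e., each is the intersection of an open subset and a closed subset of M_n(ℂ). -/

import Mathlib

open Matrix

/-- `Mn n` is the multiplicative monoid of `n × n` complex matrices. -/
abbrev Mn (n : ℕ) : Type := Matrix (Fin n) (Fin n) ℂ

/-- A subset of `Mn n` is algebraic if it is the common zero set of a family of
polynomials in the `n²` matrix entries. -/
def IsAlgebraicMatrixSet {n : ℕ} (X : Set (Mn n)) : Prop :=
  ∃ s : Set (MvPolynomial (Fin n × Fin n) ℂ),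
    X = {x | ∀ p ∈ s, MvPolynomial.eval (fun ij => x ij.1 ij.2) p = 0}

/-- `M` is a regular irreducible algebraic monoid in `Mn n`. -/
structure IsRegIrrAlgMonoid {n : ℕ} (M : Set (Mn n)) : Prop where
  one_mem : (1 : Mn n) ∈ M
  mul_mem : ∀ a ∈ M, ∀ b ∈ M, a * b ∈ M
  algebraic : IsAlgebraicMatrixSet M
  regular : ∀ a ∈ M, ∃ x ∈ M, a * x * a = a
  irreducible : ¬ ∃ A B : Set (Mn n), IsAlgebraicMatrixSet A ∧ IsAlgebraicMatrixSet B ∧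
      A ∪ B = M ∧ A ≠ M ∧ B ≠ M

/-- The group of units of the monoid `M` (as a subset of `Mn n`). -/
def unitsOf {n : ℕ} (M : Set (Mn n)) : Set (Mn n) :=
  {u | u ∈ M ∧ ∃ v ∈ M, u * v = 1 ∧ v * u = 1}

def lSet {n : ℕ} (S : Set (Mn n)) (a : Mn n) : Set (Mn n) := {y | ∃ x ∈ S, y = x * a}
def rSet {n : ℕ} (S : Set (Mn n)) (a : Mn n) : Set (Mn n) := {y | ∃ x ∈ S, y = a * x}
def jSet {n : ℕ} (S : Set (Mn n)) (a : Mn n) : Set (Mn n) :=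
  {y | ∃ x ∈ S, ∃ z ∈ S, y = x * a * z}

/-- Green's relation 𝓛 in the monoid `S`: `a 𝓛 b` iff `Sa = Sb`. -/
def GreenL {n : ℕ} (S : Set (Mn n)) (a b : Mn n) : Prop := lSet S a = lSet S b
/-- Green's relation 𝓡 in the monoid `S`: `a 𝓡 b` iff `aS = bS`. -/
def GreenR {n : ℕ} (S : Set (Mn n)) (a b : Mn n) : Prop := rSet S a = rSet S b
/-- Green's relation 𝓓: `a 𝓓 b` iff there is `c ∈ S` with `a 𝓛 c` and `c 𝓡 b`. -/
def GreenD {n : ℕ} (S : Set (Mn n)) (a b : Mn n) : Prop :=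
  ∃ c ∈ S, GreenL S a c ∧ GreenR S c b
/-- Green's relation 𝓙: `a 𝓙 b` iff `SaS = SbS`. -/
def GreenJ {n : ℕ} (S : Set (Mn n)) (a b : Mn n) : Prop := jSet S a = jSet S b

def LClass {n : ℕ} (S : Set (Mn n)) (a : Mn n) : Set (Mn n) := {b ∈ S | GreenL S a b}
def RClass {n : ℕ} (S : Set (Mn n)) (a : Mn n) : Set (Mn n) := {b ∈ S | GreenR S a b}
def DClass {n : ℕ} (S : Set (Mn n)) (a : Mn n) : Set (Mn n) := {b ∈ S | GreenD S a b}
def JClass {n : ℕ} (S : Set (Mn n)) (a : Mn n) : Set (Mn n) := {b ∈ S | GreenJ S a b}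

/-- The set of idempotents in a subset `T`. -/
def idem {n : ℕ} (T : Set (Mn n)) : Set (Mn n) := {x ∈ T | x * x = x}

/-- `rng x` : the row space of `x`, i.e. the image of the linear map `v ↦ v ᵥ* x`
on row vectors (equivalently, the range of `xᵀ *ᵥ ·`). -/
noncomputable def rng {n : ℕ} (x : Mn n) : Submodule ℂ (Fin n → ℂ) :=
  LinearMap.range xᵀ.mulVecLin

/-- `nul x` : the left null space `{v : v ᵥ* x = 0}` of `x`. -/
noncomputable def nul {n : ℕ} (x : Mn n) : Submodule ℂ (Fin n → ℂ) :=
  LinearMap.ker xᵀ.mulVecLin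


section Stmt4Auxiliary

open Matrix

namespace Stmt4Aux

variable {n : ℕ}

lemma mem_rng_iff {x : Mn n} {v : Fin n → ℂ} : v ∈ rng x ↔ ∃ w, w ᵥ* x = v := by
  constructor
  · rintro ⟨w, rfl⟩
    exact ⟨w, by simp [Matrix.mulVecLin_apply, Matrix.mulVec_transpose]⟩
  · rintro ⟨w, rfl⟩
    exact ⟨w, by simp [Matrix.mulVecLin_apply, Matrix.mulVec_transpose]⟩

lemma rng_mul_le (c b : Mn n) : rng (c * b) ≤ rng b := by
  intro v hv
  rw [mem_rng_iff] at hv ⊢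
  obtain ⟨w, rfl⟩ := hv
  exact ⟨w ᵥ* c, Matrix.vecMul_vecMul w c b⟩

lemma row_mem_rng (b : Mn n) (i : Fin n) : b i ∈ rng b :=
  mem_rng_iff.2 ⟨Pi.single i 1, Matrix.single_one_vecMul i b⟩

/-- If `e` is idempotent and the row space of `b` lies in that of `e`, then `b * e = b`. -/
lemma mul_idem_eq_self {e b : Mn n} (he : e * e = e) (hle : rng b ≤ rng e) :
    b * e = b := by
  ext i j
  obtain ⟨w, hw⟩ := mem_rng_iff.1 (hle (row_mem_rng b i))
  have h1 : (b * e) i = (b i) ᵥ* e := by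
    ext k; simp [Matrix.mul_apply, Matrix.vecMul, dotProduct]
  have h2 : (b i) ᵥ* e = b i := by
    rw [← hw, Matrix.vecMul_vecMul, he]
  rw [h1, h2]

lemma rank_transpose_eq_finrank_rng (b : Mn n) :
    Matrix.rank bᵀ = Module.finrank ℂ (rng b) := rfl

lemma rank_le_of_det_ne {r : ℕ} (A : Mn n) (u : Matrix (Fin r) (Fin n) ℂ)
    (v : Matrix (Fin n) (Fin r) ℂ) (h : (u * A * v).det ≠ 0) : r ≤ A.rank := by
  have hu : IsUnit (u * A * v) := (Matrix.isUnit_iff_isUnit_det _).2 (Ne.isUnit h)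
  have h1 : (u * A * v).rank = r := by
    rw [Matrix.rank_of_isUnit _ hu, Fintype.card_fin]
  calc r = (u * A * v).rank := h1.symm
    _ ≤ (u * A).rank := Matrix.rank_mul_le_left _ _
    _ ≤ A.rank := Matrix.rank_mul_le_right _ _

lemma exists_det_ne_of_le_rank {r : ℕ} (A : Mn n) (h : r ≤ A.rank) :
    ∃ (u : Matrix (Fin r) (Fin n) ℂ) (v : Matrix (Fin n) (Fin r) ℂ),
      (u * A * v).det ≠ 0 := by
  classical
  set W := LinearMap.range A.mulVecLin with hW
  have hfr : r ≤ Module.finrank ℂ W := h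
  let β := Module.finBasis ℂ W
  have hx : ∀ j : Fin r, ∃ x : Fin n → ℂ, A *ᵥ x = (β (Fin.castLE hfr j) : Fin n → ℂ) := by
    intro j
    obtain ⟨x, hx⟩ := (β (Fin.castLE hfr j)).2
    exact ⟨x, hx⟩
  choose x hxs using hx
  let v : Matrix (Fin n) (Fin r) ℂ := Matrix.of fun i j => x j i
  have hAv : ∀ j : Fin r, (A * v)ᵀ j = (β (Fin.castLE hfr j) : Fin n → ℂ) := by
    intro j
    ext i
    rw [← hxs j]
    simp [Matrix.transpose_apply, Matrix.mul_apply, Matrix.mulVec, dotProduct, v]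
  have hli : LinearIndependent ℂ (fun j : Fin r => (A * v)ᵀ j) := by
    have h1 : LinearIndependent ℂ (fun i : Fin (Module.finrank ℂ W) => (β i : Fin n → ℂ)) :=
      β.linearIndependent.map' W.subtype W.ker_subtype
    have h2 := h1.comp (Fin.castLE hfr) (Fin.castLE_injective hfr)
    have heq : (fun j : Fin r => (A * v)ᵀ j) =
        (fun i : Fin (Module.finrank ℂ W) => (β i : Fin n → ℂ)) ∘ Fin.castLE hfr := by
      funext j; exact hAv j
    rwa [heq]
  have hinj : Function.Injective (A * v).mulVecLin := by
    have h3 : Function.Injective ((A * v)ᵀ).vecMul := Matrix.vecMul_injective_iff.2 hli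
    rwa [← Matrix.coe_vecMulLinear, Matrix.vecMulLinear_transpose,
      Matrix.coe_mulVecLin] at h3
  obtain ⟨g, hg⟩ := (A * v).mulVecLin.exists_leftInverse_of_injective
    (LinearMap.ker_eq_bot.2 hinj)
  refine ⟨LinearMap.toMatrix' g, v, ?_⟩
  have h1 : LinearMap.toMatrix' g * (A * v) = 1 := by
    have h4 := congrArg LinearMap.toMatrix' hg
    rw [LinearMap.toMatrix'_comp, LinearMap.toMatrix'_id, ← Matrix.toLin'_apply',
      LinearMap.toMatrix'_toLin'] at h4
    exact h4
  rw [Matrix.mul_assoc, h1]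
  simp

lemma lSet_subset {M : Set (Mn n)} (hmul : ∀ a ∈ M, ∀ b ∈ M, a * b ∈ M)
    {a b : Mn n} (hb : b ∈ lSet M a) : lSet M b ⊆ lSet M a := by
  obtain ⟨c, hc, rfl⟩ := hb
  rintro y ⟨d, hd, rfl⟩
  exact ⟨d * c, hmul d hd c hc, (Matrix.mul_assoc d c a).symm⟩

/-- From regularity, produce an idempotent that is a right identity for `a` and
has the same row space. -/
lemma exists_right_idem {M : Set (Mn n)} (hmul : ∀ a ∈ M, ∀ b ∈ M, a * b ∈ M)
    (hreg : ∀ a ∈ M, ∃ x ∈ M, a * x * a = a) {a : Mn n} (ha : a ∈ M) :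
    ∃ x ∈ M, (x * a) ∈ M ∧ (x * a) * (x * a) = x * a ∧ a * (x * a) = a ∧
      rng (x * a) = rng a := by
  obtain ⟨x, hx, hxa⟩ := hreg a ha
  have hae : a * (x * a) = a := by rw [← Matrix.mul_assoc, hxa]
  refine ⟨x, hx, hmul x hx a ha, ?_, hae, ?_⟩
  · calc (x * a) * (x * a) = x * (a * (x * a)) := by rw [Matrix.mul_assoc]
      _ = x * a := by rw [hae]
  · refine le_antisymm (rng_mul_le x a) ?_
    calc rng a = rng (a * (x * a)) := by rw [hae]
      _ ≤ rng (x * a) := rng_mul_le a (x * a)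

/-- In a regular submonoid of matrices, Green's `𝓛` relation is characterized by
equality of row spaces. -/
lemma greenL_iff_rng {M : Set (Mn n)}
    (hone : (1 : Mn n) ∈ M) (hmul : ∀ a ∈ M, ∀ b ∈ M, a * b ∈ M)
    (hreg : ∀ a ∈ M, ∃ x ∈ M, a * x * a = a)
    {a b : Mn n} (ha : a ∈ M) (hb : b ∈ M) :
    GreenL M a b ↔ rng a = rng b := by
  constructor
  · intro h
    have h1 : a ∈ lSet M b := h ▸ ⟨1, hone, (one_mul a).symm⟩
    have h2 : b ∈ lSet M a := h.symm ▸ ⟨1, hone, (one_mul b).symm⟩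
    obtain ⟨c, hc, hcb⟩ := h1
    obtain ⟨d, hd, hda⟩ := h2
    refine le_antisymm ?_ ?_
    · rw [hcb]; exact rng_mul_le c b
    · rw [hda]; exact rng_mul_le d a
  · intro h
    obtain ⟨xa, hxaM, heM, hee, hae, hrea⟩ := exists_right_idem hmul hreg ha
    obtain ⟨xb, hxbM, hfM, hff, hbf, hrfb⟩ := exists_right_idem hmul hreg hb
    set e := xa * a with hedef
    set f := xb * b with hfdef
    have hef : e * f = e := mul_idem_eq_self hff (by rw [hrea, h, ← hrfb])
    have hfe : f * e = f := mul_idem_eq_self hee (by rw [hrfb, ← h, ← hrea])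
    have haf : a * f = a := by
      calc a * f = (a * e) * f := by rw [hae]
        _ = a * (e * f) := by rw [Matrix.mul_assoc]
        _ = a * e := by rw [hef]
        _ = a := hae
    have hbe : b * e = b := by
      calc b * e = (b * f) * e := by rw [hbf]
        _ = b * (f * e) := by rw [Matrix.mul_assoc]
        _ = b * f := by rw [hfe]
        _ = b := hbf
    have hamem : a ∈ lSet M b := by
      refine ⟨a * xb, hmul a ha xb hxbM, ?_⟩
      rw [Matrix.mul_assoc, ← hfdef, haf]
    have hbmem : b ∈ lSet M a := by
      refine ⟨b * xa, hmul b hb xa hxaM, ?_⟩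
      rw [Matrix.mul_assoc, ← hedef, hbe]
    exact Set.Subset.antisymm (lSet_subset hmul hamem) (lSet_subset hmul hbmem)

lemma isClosed_of_algebraic {X : Set (Mn n)} (h : IsAlgebraicMatrixSet X) :
    IsClosed X := by
  obtain ⟨s, rfl⟩ := h
  have heq : {x : Mn n | ∀ p ∈ s, MvPolynomial.eval (fun ij => x ij.1 ij.2) p = 0}
      = ⋂ p ∈ s, {x : Mn n | MvPolynomial.eval (fun ij => x ij.1 ij.2) p = 0} := by
    ext x; simp
  rw [heq]
  refine isClosed_biInter fun p hp => ?_
  have hc1 : Continuous fun x : Mn n => (fun ij : Fin n × Fin n => x ij.1 ij.2) :=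
    continuous_pi fun ij : Fin n × Fin n =>
      ((continuous_apply ij.2).comp (continuous_apply ij.1) :
        Continuous fun x : Mn n => x ij.1 ij.2)
  have hc : Continuous fun x : Mn n =>
      MvPolynomial.eval (fun ij : Fin n × Fin n => x ij.1 ij.2) p :=
    (MvPolynomial.continuous_eval p).comp hc1
  exact isClosed_eq hc continuous_const

/-- The main auxiliary result: the `𝓛`-class of `a` in a closed regular submonoid
of matrices is the intersection of an open and a closed set. -/
lemma locallyClosed_LClass {M : Set (Mn n)}
    (hone : (1 : Mn n) ∈ M) (hmul : ∀ a ∈ M, ∀ b ∈ M, a * b ∈ M)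
    (hreg : ∀ a ∈ M, ∃ x ∈ M, a * x * a = a) (hclosed : IsClosed M)
    {a : Mn n} (ha : a ∈ M) :
    ∃ U F : Set (Mn n), IsOpen U ∧ IsClosed F ∧ {b ∈ M | GreenL M a b} = U ∩ F := by
  obtain ⟨xa, hxaM, heM, hee, hae, hrea⟩ := exists_right_idem hmul hreg ha
  set e := xa * a with hedef
  set r := Matrix.rank aᵀ with hrdef
  refine ⟨{b : Mn n | ∃ u : Matrix (Fin r) (Fin n) ℂ, ∃ v : Matrix (Fin n) (Fin r) ℂ,
      (u * bᵀ * v).det ≠ 0}, M ∩ {b : Mn n | b * e = b}, ?_, ?_, ?_⟩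
  · have hU : {b : Mn n | ∃ u : Matrix (Fin r) (Fin n) ℂ, ∃ v : Matrix (Fin n) (Fin r) ℂ,
        (u * bᵀ * v).det ≠ 0}
        = ⋃ u : Matrix (Fin r) (Fin n) ℂ, ⋃ v : Matrix (Fin n) (Fin r) ℂ,
          {b : Mn n | (u * bᵀ * v).det ≠ 0} := by
      ext b; simp
    rw [hU]
    refine isOpen_iUnion fun u => isOpen_iUnion fun v => ?_
    have hc : Continuous fun b : Mn n => (u * bᵀ * v).det :=
      ((continuous_const.matrix_mul (continuous_id.matrix_transpose)).matrix_mul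
        continuous_const).matrix_det
    exact isOpen_ne.preimage hc
  · exact hclosed.inter
      (isClosed_eq (continuous_id.matrix_mul continuous_const) continuous_id)
  · ext b
    simp only [Set.mem_inter_iff, Set.mem_setOf_eq]
    constructor
    · rintro ⟨hbM, hg⟩
      have hr : rng a = rng b := (greenL_iff_rng hone hmul hreg ha hbM).1 hg
      refine ⟨?_, hbM, mul_idem_eq_self hee (by rw [← hr, ← hrea])⟩
      have hle : r ≤ Matrix.rank bᵀ := by
        rw [hrdef, rank_transpose_eq_finrank_rng, rank_transpose_eq_finrank_rng, hr]
      exact exists_det_ne_of_le_rank bᵀ hle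
    · rintro ⟨⟨u, v, hdet⟩, hbM, hbe⟩
      have hle : rng b ≤ rng a := by
        rw [← hrea, ← hbe]
        exact rng_mul_le b e
      have hfr : Module.finrank ℂ (rng a) ≤ Module.finrank ℂ (rng b) := by
        rw [← rank_transpose_eq_finrank_rng, ← rank_transpose_eq_finrank_rng]
        exact rank_le_of_det_ne bᵀ u v hdet
      have heq : rng b = rng a := Submodule.eq_of_le_of_finrank_le hle hfr
      exact ⟨hbM, (greenL_iff_rng hone hmul hreg ha hbM).2 heq.symm⟩

end Stmt4Aux

end Stmt4Auxiliary

/-- For `a ∈ M`, the Green classes `L_a^M` and `R_a^M` are locally closed subsets of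
`Mn n` in the euclidean topology: each is the intersection of an open set and a
closed set. -/
theorem stmt_4 {n : ℕ} (M : Set (Mn n)) (hM : IsRegIrrAlgMonoid M)
    (a : Mn n) (ha : a ∈ M) :
    (∃ U F : Set (Mn n), IsOpen U ∧ IsClosed F ∧ LClass M a = U ∩ F) ∧
    (∃ U F : Set (Mn n), IsOpen U ∧ IsClosed F ∧ RClass M a = U ∩ F) := by
  classical
  have hone := hM.one_mem
  have hmul := hM.mul_mem
  have hreg := hM.regular
  have hclosed : IsClosed M := Stmt4Aux.isClosed_of_algebraic hM.algebraic
  constructor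
  · exact Stmt4Aux.locallyClosed_LClass hone hmul hreg hclosed ha
  · -- transfer to the transposed monoid
    set T : Set (Mn n) := {x : Mn n | xᵀ ∈ M} with hTdef
    have htc : Continuous fun z : Mn n => zᵀ := continuous_id.matrix_transpose
    have hT1 : (1 : Mn n) ∈ T := by
      show (1 : Mn n)ᵀ ∈ M
      rw [Matrix.transpose_one]; exact hone
    have hTmul : ∀ a ∈ T, ∀ b ∈ T, a * b ∈ T := by
      intro x hx y hy
      show (x * y)ᵀ ∈ M
      rw [Matrix.transpose_mul]
      exact hmul _ hy _ hx
    have hTreg : ∀ a ∈ T, ∃ x ∈ T, a * x * a = a := by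
      intro c hc
      obtain ⟨x, hx, hxc⟩ := hreg cᵀ hc
      refine ⟨xᵀ, by show (xᵀ)ᵀ ∈ M; simpa [Matrix.transpose_transpose] using hx, ?_⟩
      have h4 := congrArg Matrix.transpose hxc
      simpa [Matrix.transpose_mul, Matrix.mul_assoc] using h4
    have hTclosed : IsClosed T := hclosed.preimage htc
    have haT : aᵀ ∈ T := by
      show (aᵀ)ᵀ ∈ M
      rw [Matrix.transpose_transpose]; exact ha
    obtain ⟨U, F, hU, hF, hUF⟩ :=
      Stmt4Aux.locallyClosed_LClass hT1 hTmul hTreg hTclosed haT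
    refine ⟨(fun z : Mn n => zᵀ) ⁻¹' U, (fun z : Mn n => zᵀ) ⁻¹' F,
      hU.preimage htc, hF.preimage htc, ?_⟩
    have hRL : ∀ c : Mn n, lSet T cᵀ = (fun z : Mn n => zᵀ) ⁻¹' rSet M c := by
      intro c; ext z
      constructor
      · rintro ⟨x, hx, rfl⟩
        refine ⟨xᵀ, hx, ?_⟩
        show (x * cᵀ)ᵀ = c * xᵀ
        rw [Matrix.transpose_mul, Matrix.transpose_transpose]
      · rintro ⟨m, hm, hzm⟩
        have hzm' : zᵀ = c * m := hzm
        refine ⟨mᵀ, by show (mᵀ)ᵀ ∈ M; simpa [Matrix.transpose_transpose] using hm, ?_⟩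
        show z = mᵀ * cᵀ
        rw [← Matrix.transpose_transpose z, hzm', Matrix.transpose_mul]
    have htsurj : Function.Surjective fun z : Mn n => zᵀ :=
      Function.Involutive.surjective fun z => Matrix.transpose_transpose z
    have hGreen : ∀ b : Mn n, (GreenR M a b ↔ GreenL T aᵀ bᵀ) := by
      intro b
      constructor
      · intro h
        show lSet T aᵀ = lSet T bᵀ
        rw [hRL a, hRL b, h]
      · intro h
        have h5 : (fun z : Mn n => zᵀ) ⁻¹' rSet M a
            = (fun z : Mn n => zᵀ) ⁻¹' rSet M b := by
          rw [← hRL a, ← hRL b]; exact h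
        exact (Set.preimage_eq_preimage htsurj).1 h5
    have hRdesc : RClass M a = (fun z : Mn n => zᵀ) ⁻¹' {b ∈ T | GreenL T aᵀ b} := by
      ext b
      simp only [RClass, Set.mem_setOf_eq, Set.mem_preimage]
      constructor
      · rintro ⟨hbM, hg⟩
        refine ⟨?_, (hGreen b).1 hg⟩
        show (bᵀ)ᵀ ∈ M
        rw [Matrix.transpose_transpose]; exact hbM
      · rintro ⟨hbT, hg⟩
        have hbM : b ∈ M := by
          have : (bᵀ)ᵀ ∈ M := hbT
          rwa [Matrix.transpose_transpose] at this
        exact ⟨hbM, (hGreen b).2 hg⟩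
    rw [hRdesc, hUF, Set.preimage_inter]
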